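/- Let μ, ν > −1/2. Then for all x, y > 0, ∫_{x+y}^{+∞} |R_{μ,ν}(x,y,z)| (xy)^{−μ} z^{μ+1} dz = (|sin((ν−μ)π)| / (π³/2)^{1/2}) ∫₁^{+∞} (t²−1)^{μ/2−1/4} |Q^{1/2−μ}_{ν−1/2}(t)| dt, as an equality of (possibly infinite) Lebesgue integrals; in particular the left-hand side does not depend on x and y. -/

import Mathlib

open MeasureTheory Real Set Filter Topology

/-- Gauss hypergeometric function ₂F₁(a,b;c;s) as a power series. -/
noncomputable def hyp2F1 (a b c s : ℝ) : ℝ :=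
  ∑' n : ℕ, ((∏ i ∈ Finset.range n, (a + i)) * (∏ i ∈ Finset.range n, (b + i)) /
    ((∏ i ∈ Finset.range n, (c + i)) * n.factorial)) * s ^ n

/-- Associated Legendre function of the first kind, for -1 < t < 1. -/
noncomputable def legendreP (μ ν t : ℝ) : ℝ :=
  (1 / Real.Gamma (1 - μ)) * ((1 + t) / (1 - t)) ^ (μ / 2) *
    hyp2F1 (ν + 1) (-ν) (1 - μ) ((1 - t) / 2)

/-- The real factor of the associated Legendre function of the second kind (t > 1),
i.e. `Q^μ_ν(t)` without its phase `e^{iπμ}`. -/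
noncomputable def legendreQreal (μ ν t : ℝ) : ℝ :=
  Real.sqrt Real.pi * Real.Gamma (μ + ν + 1) * (t ^ 2 - 1) ^ (μ / 2) /
    ((2 : ℝ) ^ (ν + 1) * t ^ (μ + ν + 1) * Real.Gamma (ν + 3 / 2)) *
    hyp2F1 ((μ + ν) / 2 + 1) ((μ + ν + 1) / 2) (ν + 3 / 2) (1 / t ^ 2)

/-- Associated Legendre function of the second kind, for t > 1. -/
noncomputable def legendreQ (μ ν t : ℝ) : ℂ :=
  Complex.exp ((Real.pi * μ : ℝ) * Complex.I) * (legendreQreal μ ν t : ℝ)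

/-- Macdonald's integral `R_{μ,ν}(x,y,z)` of three Bessel functions, for x, y, z > 0. -/
noncomputable def Rmn (μ ν x y z : ℝ) : ℝ :=
  if z < |x - y| then 0
  else if z < x + y then
    (x * y) ^ (μ - 1) *
      Real.sqrt (1 - ((x ^ 2 + y ^ 2 - z ^ 2) / (2 * x * y)) ^ 2) ^ (μ - 1 / 2) *
      legendreP (1 / 2 - μ) (ν - 1 / 2) ((x ^ 2 + y ^ 2 - z ^ 2) / (2 * x * y)) /
      (Real.sqrt (2 * Real.pi) * z ^ μ)
  else
    Real.sin ((ν - μ) * Real.pi) * (x * y) ^ (μ - 1) *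
      Real.sqrt (((z ^ 2 - x ^ 2 - y ^ 2) / (2 * x * y)) ^ 2 - 1) ^ (μ - 1 / 2) *
      legendreQreal (1 / 2 - μ) (ν - 1 / 2) ((z ^ 2 - x ^ 2 - y ^ 2) / (2 * x * y)) /
      (Real.sqrt (Real.pi ^ 3 / 2) * z ^ μ)

/-- Normalized Bessel function 𝒥_ν. -/
noncomputable def normBessel (ν w : ℝ) : ℝ :=
  Real.Gamma (ν + 1) *
    ∑' n : ℕ, (-1 : ℝ) ^ n * (w / 2) ^ (2 * n) / (n.factorial * Real.Gamma (ν + n + 1))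

/-- Bessel function of the first kind J_ν. -/
noncomputable def besselJ (ν w : ℝ) : ℝ :=
  (w / 2) ^ ν *
    ∑' n : ℕ, (-1 : ℝ) ^ n * (w / 2) ^ (2 * n) / (n.factorial * Real.Gamma (ν + n + 1))

/-- The constant m_{k,a}. -/
noncomputable def mka (k a : ℝ) : ℂ :=
  Complex.exp ((-(Real.pi / a) : ℝ) * Complex.I) *
    ((Real.Gamma ((2 * k + a - 1) / a) /
      (a ^ ((2 : ℝ) / a) * Real.Gamma ((2 * k + a + 1) / a)) : ℝ) : ℂ)

/-- The one-dimensional (k,a)-generalized Fourier kernel B_{k,a}(λ,x). -/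
noncomputable def Bka (k a lam x : ℝ) : ℂ :=
  ((normBessel ((2 * k - 1) / a) ((2 / a) * |lam * x| ^ (a / 2)) : ℝ) : ℂ) +
    mka k a * ((lam * x : ℝ) : ℂ) *
      ((normBessel ((2 * k + 1) / a) ((2 / a) * |lam * x| ^ (a / 2)) : ℝ) : ℂ)

/-- The kernel Δ_{k,a}(x,y,z) of the product formula. -/
noncomputable def DeltaKA (k a x y z : ℝ) : ℂ :=
  ((a * (2 : ℝ) ^ ((2 * k - 1) / a - 2) * Real.Gamma ((2 * k - 1) / a + 1) *
      |x * y * z| ^ ((1 : ℝ) / 2 - k) : ℝ) : ℂ) *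
  (((Rmn ((2 * k - 1) / a) ((2 * k - 1) / a) (|x| ^ (a / 2)) (|y| ^ (a / 2)) (|z| ^ (a / 2)) : ℝ) : ℂ) +
    Complex.exp ((-(2 * Real.pi / a) : ℝ) * Complex.I) * ((Real.sign (x * y) : ℝ) : ℂ) *
      ((Rmn ((2 * k - 1) / a) ((2 * k + 1) / a) (|x| ^ (a / 2)) (|y| ^ (a / 2)) (|z| ^ (a / 2)) : ℝ) : ℂ) +
    ((Real.sign (x * z) : ℝ) : ℂ) *
      ((Rmn ((2 * k - 1) / a) ((2 * k + 1) / a) (|x| ^ (a / 2)) (|z| ^ (a / 2)) (|y| ^ (a / 2)) : ℝ) : ℂ) +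
    ((Real.sign (y * z) : ℝ) : ℂ) *
      ((Rmn ((2 * k - 1) / a) ((2 * k + 1) / a) (|y| ^ (a / 2)) (|z| ^ (a / 2)) (|x| ^ (a / 2)) : ℝ) : ℂ))

/-- The weighted measure |x|^{2k+a-2} dx on ℝ. -/
noncomputable def wMeasure (k a : ℝ) : Measure ℝ :=
  volume.withDensity fun x => ENNReal.ofReal (|x| ^ (2 * k + a - 2))

/-- Gegenbauer polynomial C_n^μ. -/
noncomputable def gegenbauer (μ : ℝ) (n : ℕ) (x : ℝ) : ℝ :=
  ∑ j ∈ Finset.range (n / 2 + 1),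
    (-1 : ℝ) ^ j * Real.Gamma ((n : ℝ) - j + μ) /
      (Real.Gamma μ * j.factorial * (n - 2 * j).factorial) * (2 * x) ^ (n - 2 * j)
/-- The hyperbolic-range integral of |R_{μ,ν}| reduces to an integral of the Legendre Q function. -/
theorem statement10 (μ ν : ℝ) (hμ : -(1 / 2) < μ) (hν : -(1 / 2) < ν)
    (x y : ℝ) (hx : 0 < x) (hy : 0 < y) :
    ∫⁻ z in Set.Ioi (x + y),
        ENNReal.ofReal (|Rmn μ ν x y z| * (x * y) ^ (-μ) * z ^ (μ + 1)) =
      ENNReal.ofReal (|Real.sin ((ν - μ) * Real.pi)| / Real.sqrt (Real.pi ^ 3 / 2)) *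
        ∫⁻ t in Set.Ioi (1 : ℝ),
          ENNReal.ofReal ((t ^ 2 - 1) ^ (μ / 2 - 1 / 4) *
            ‖legendreQ (1 / 2 - μ) (ν - 1 / 2) t‖) := by
  have hxy : (0:ℝ) < x * y := mul_pos hx hy
  have hxy2 : (0:ℝ) < 2 * x * y := by linarith
  have hP : (0:ℝ) < Real.sqrt (Real.pi ^ 3 / 2) :=
    Real.sqrt_pos.mpr (by positivity)
  set f : ℝ → ℝ := fun z => (z ^ 2 - x ^ 2 - y ^ 2) / (2 * x * y) with hfdef
  have hderiv : ∀ z ∈ Set.Ioi (x + y), HasDerivWithinAt f (z / (x * y)) (Set.Ioi (x + y)) z := by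
    intro z _
    have h : HasDerivAt f ((2 * z ^ 1) / (2 * x * y)) z :=
      (((hasDerivAt_pow 2 z).sub_const (x ^ 2)).sub_const (y ^ 2)).div_const _
    have he : (2 * z ^ 1) / (2 * x * y) = z / (x * y) := by
      field_simp
    exact (he ▸ h).hasDerivWithinAt
  have hmono : StrictMonoOn f (Set.Ioi (x + y)) := by
    intro a ha b hb hab
    simp only [Set.mem_Ioi] at ha hb
    have ha0 : 0 < a := by nlinarith
    exact div_lt_div_of_pos_right (by nlinarith) hxy2
  have himg : f '' Set.Ioi (x + y) = Set.Ioi (1 : ℝ) := by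
    ext t
    constructor
    · rintro ⟨z, hz, rfl⟩
      simp only [Set.mem_Ioi] at hz ⊢
      rw [lt_div_iff₀ hxy2]
      nlinarith
    · intro ht
      simp only [Set.mem_Ioi] at ht
      refine ⟨Real.sqrt (2 * x * y * t + x ^ 2 + y ^ 2), ?_, ?_⟩
      · have h1 : (x + y) ^ 2 < 2 * x * y * t + x ^ 2 + y ^ 2 := by nlinarith
        have : x + y = Real.sqrt ((x + y) ^ 2) := by
          rw [Real.sqrt_sq (by positivity)]
        simp only [Set.mem_Ioi]
        rw [this]
        exact Real.sqrt_lt_sqrt (by positivity) h1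
      · have hnn : (0:ℝ) ≤ 2 * x * y * t + x ^ 2 + y ^ 2 := by nlinarith
        simp only [hfdef]
        rw [Real.sq_sqrt hnn]
        field_simp
        ring
  have key := lintegral_image_eq_lintegral_abs_det_fderiv_mul (volume : Measure ℝ)
    (measurableSet_Ioi : MeasurableSet (Set.Ioi (x + y)))
    (fun z hz => (hderiv z hz).hasFDerivWithinAt) (hmono.injOn)
    (fun t => ENNReal.ofReal ((t ^ 2 - 1) ^ (μ / 2 - 1 / 4) *
      ‖legendreQ (1 / 2 - μ) (ν - 1 / 2) t‖))
  rw [himg] at key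
  rw [key, ← lintegral_const_mul' _ _ ENNReal.ofReal_ne_top]
  apply setLIntegral_congr_fun measurableSet_Ioi
  intro z hz
  simp only [Set.mem_Ioi] at hz
  have hz0 : 0 < z := by nlinarith
  set t : ℝ := (z ^ 2 - x ^ 2 - y ^ 2) / (2 * x * y) with htdef
  have ht1 : 1 < t := by rw [htdef, lt_div_iff₀ hxy2]; nlinarith
  have hs0 : (0:ℝ) < t ^ 2 - 1 := by nlinarith
  have hfz : f z = t := rfl
  simp only [hfz, ContinuousLinearMap.det_toSpanSingleton]
  -- compute Complex.abs of legendreQ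
  have habsQ : ‖legendreQ (1 / 2 - μ) (ν - 1 / 2) t‖ =
      |legendreQreal (1 / 2 - μ) (ν - 1 / 2) t| := by
    simp [legendreQ, map_mul, Complex.norm_exp, Complex.norm_real]
  -- unfold Rmn in the hyperbolic range
  have hnot1 : ¬ z < |x - y| := by
    rw [not_lt, abs_le]; constructor <;> nlinarith
  have hnot2 : ¬ z < x + y := not_lt.mpr hz.le
  have hsqrt : Real.sqrt (t ^ 2 - 1) ^ (μ - 1 / 2)
      = (t ^ 2 - 1) ^ (μ / 2 - 1 / 4) := by
    rw [Real.sqrt_eq_rpow, ← Real.rpow_mul hs0.le]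
    norm_num
    ring_nf
  simp only [Rmn, if_neg hnot1, if_neg hnot2, ← htdef, hsqrt, habsQ]
  rw [← ENNReal.ofReal_mul (by positivity), ← ENNReal.ofReal_mul (by positivity)]
  congr 1
  have hA : (0:ℝ) < (x * y) ^ (μ - 1) := Real.rpow_pos_of_pos hxy _
  have hB : (0:ℝ) ≤ (t ^ 2 - 1) ^ (μ / 2 - 1 / 4) := Real.rpow_nonneg hs0.le _
  have hPz : (0:ℝ) < Real.sqrt (Real.pi ^ 3 / 2) * z ^ μ :=
    mul_pos hP (Real.rpow_pos_of_pos hz0 _)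
  rw [abs_div, abs_mul, abs_mul, abs_mul, abs_of_pos hA, abs_of_nonneg hB,
    abs_of_pos hPz, abs_of_pos (div_pos hz0 hxy)]
  rw [Real.rpow_sub hxy, Real.rpow_one, Real.rpow_neg hxy.le, Real.rpow_add hz0,
    Real.rpow_one]
  have hxyμ : (x * y) ^ μ ≠ 0 := (Real.rpow_pos_of_pos hxy _).ne'
  have hzμ : z ^ μ ≠ 0 := (Real.rpow_pos_of_pos hz0 _).ne'
  field_simp
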